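/- For the chain potential W = x₁^{a₁}x₂ + x₂^{a₂}x₃ + ⋯ + x_{n-1}^{a_{n-1}}xₙ + xₙ^{aₙ}, the group Aut(W) = A⁻¹ℤ^n/ℤ^n is cyclic of order a₁⋯aₙ, generated by the vector (φ₁,…,φₙ) with φᵢ = (−1)^{n+i}/(aᵢ⋯aₙ). -/

import Mathlib

open Matrix QuotientAddGroup

noncomputable section

def IntLat (n : ℕ) : AddSubgroup (Fin n → ℚ) where
  carrier := {v | ∀ i, ∃ m : ℤ, v i = (m : ℚ)}
  add_mem' := by
    intro a b ha hb i
    obtain ⟨p, hp⟩ := ha i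
    obtain ⟨q, hq⟩ := hb i
    exact ⟨p + q, by simp [hp, hq]⟩
  zero_mem' := fun i => ⟨0, by simp⟩
  neg_mem' := by
    intro a ha i
    obtain ⟨p, hp⟩ := ha i
    exact ⟨-p, by simp [hp]⟩

abbrev QuotLat (n : ℕ) := (Fin n → ℚ) ⧸ IntLat n

def ratMat {n : ℕ} (A : Matrix (Fin n) (Fin n) ℤ) : Matrix (Fin n) (Fin n) ℚ :=
  A.map ((↑) : ℤ → ℚ)

def AutW {n : ℕ} (A : Matrix (Fin n) (Fin n) ℤ) : AddSubgroup (QuotLat n) :=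
  (AddSubgroup.comap (ratMat A).mulVecLin.toAddMonoidHom (IntLat n)).map
    (QuotientAddGroup.mk' (IntLat n))

def ZinQ : AddSubgroup ℚ := (Int.castAddHom ℚ).range

def sumHom (n : ℕ) : (Fin n → ℚ) →+ ℚ :=
  AddMonoidHom.mk' (fun v => ∑ i, v i) (by
    intro a b
    simpa using Finset.sum_add_distrib)

def qsum (n : ℕ) : QuotLat n →+ ℚ ⧸ ZinQ :=
  QuotientAddGroup.lift (IntLat n) ((QuotientAddGroup.mk' ZinQ).comp (sumHom n)) (by
    intro v hv
    have hv' : ∀ i, ∃ m : ℤ, v i = (m : ℚ) := hv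
    choose m hm using hv'
    have hmem : (∑ i, v i) ∈ ZinQ := ⟨∑ i, m i, by push_cast [hm]; simp⟩
    simpa [sumHom] using (QuotientAddGroup.eq_zero_iff _).mpr hmem)

def SLW {n : ℕ} (A : Matrix (Fin n) (Fin n) ℤ) : AddSubgroup (QuotLat n) :=
  AutW A ⊓ (qsum n).ker

def WellFormedWeights {n : ℕ} (w : Fin n → ℤ) (d : ℤ) : Prop :=
  (∀ i, Finset.gcd (Finset.univ.erase i) w = 1) ∧
  ∀ i j, i ≠ j → ((Finset.gcd ((Finset.univ.erase i).erase j) w) ∣ d)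

section ChainAux

variable {n : ℕ}


-- interval facts in Fin n
lemma fin_Ici_insert (i : Fin n) (h : (i : ℕ) + 1 < n) :
    Finset.Ici i = insert i (Finset.Ici (⟨(i : ℕ) + 1, h⟩ : Fin n)) := by
  ext j; have := j.isLt
  simp only [Finset.mem_Ici, Finset.mem_insert, Fin.le_def, Fin.ext_iff]
  omega

lemma fin_Ici_top (i : Fin n) (h : (i : ℕ) + 1 = n) :
    Finset.Ici i = {i} := by
  ext j; have := j.isLt
  simp only [Finset.mem_Ici, Finset.mem_singleton, Fin.le_def, Fin.ext_iff]
  omega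

lemma fin_Iio_insert (i : Fin n) (h : (i : ℕ) + 1 < n) :
    Finset.Iio (⟨(i : ℕ) + 1, h⟩ : Fin n) = insert i (Finset.Iio i) := by
  ext j; have := j.isLt
  simp only [Finset.mem_Iio, Finset.mem_insert, Fin.lt_def, Fin.ext_iff]
  omega

lemma fin_Ioo_insert (j i : Fin n) (hji : (j : ℕ) < (i : ℕ)) (h : (i : ℕ) + 1 < n) :
    Finset.Ioo j (⟨(i : ℕ) + 1, h⟩ : Fin n) = insert i (Finset.Ioo j i) := by
  ext k; have := k.isLt
  simp only [Finset.mem_Ioo, Finset.mem_insert, Fin.lt_def, Fin.ext_iff]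
  omega

lemma fin_Ioo_self (j i : Fin n) (h : (i : ℕ) + 1 < n) :
    Finset.Ioo i (⟨(i : ℕ) + 1, h⟩ : Fin n) = ∅ := by
  ext k
  simp only [Finset.mem_Ioo, Fin.lt_def, Finset.notMem_empty, iff_false, not_and]
  omega

lemma fin_Ioi_top_insert (j i : Fin n) (hji : (j : ℕ) < (i : ℕ)) (h : (i : ℕ) + 1 = n) :
    Finset.Ioi j = insert i (Finset.Ioo j i) := by
  ext k; have := k.isLt
  simp only [Finset.mem_Ioi, Finset.mem_insert, Finset.mem_Ioo, Fin.lt_def, Fin.ext_iff]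
  omega

lemma fin_Ioi_top (i : Fin n) (h : (i : ℕ) + 1 = n) : Finset.Ioi i = ∅ := by
  ext k; have := k.isLt
  simp only [Finset.mem_Ioi, Fin.lt_def, Finset.notMem_empty, iff_false]
  omega

lemma fin_univ_top (i : Fin n) (h : (i : ℕ) + 1 = n) :
    (Finset.univ : Finset (Fin n)) = insert i (Finset.Iio i) := by
  ext k; have := k.isLt
  simp only [Finset.mem_univ, Finset.mem_insert, Finset.mem_Iio, Fin.lt_def, Fin.ext_iff, true_iff]
  omega

lemma fin_univ_split (i : Fin n) :
    (Finset.univ : Finset (Fin n)) = Finset.Iio i ∪ Finset.Ici i := by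
  ext k
  simp only [Finset.mem_univ, Finset.mem_union, Finset.mem_Iio, Finset.mem_Ici, true_iff]
  exact lt_or_ge k i


lemma chain_row (a : Fin n → ℕ) (A : Matrix (Fin n) (Fin n) ℤ)
    (hAdef : A = Matrix.of fun i j =>
      if j = i then (a i : ℤ) else if (i : ℕ) + 1 = (j : ℕ) then 1 else 0)
    (u : Fin n → ℚ) (i : Fin n) :
    (ratMat A).mulVec u i =
      (a i : ℚ) * u i + (if h : (i : ℕ) + 1 < n then u ⟨(i : ℕ) + 1, h⟩ else 0) := by
  subst hAdef
  have hterm : ∀ j : Fin n,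
      (ratMat (Matrix.of fun i j =>
        if j = i then (a i : ℤ) else if (i : ℕ) + 1 = (j : ℕ) then 1 else 0)) i j * u j
      = (if j = i then (a i : ℚ) * u j else 0)
        + (if (i : ℕ) + 1 = (j : ℕ) then u j else 0) := by
    intro j
    simp only [ratMat, Matrix.map_apply, Matrix.of_apply]
    by_cases h1 : j = i
    · have h2 : ¬ ((i : ℕ) + 1 = (j : ℕ)) := by rw [h1]; omega
      simp [h1, h2]
    · by_cases h2 : (i : ℕ) + 1 = (j : ℕ) <;> simp [h1, h2]
  rw [Matrix.mulVec, dotProduct, Finset.sum_congr rfl fun j _ => hterm j,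
    Finset.sum_add_distrib]
  congr 1
  · rw [Finset.sum_ite_eq' Finset.univ i fun j => (a i : ℚ) * u j, if_pos (Finset.mem_univ i)]
  · by_cases h : (i : ℕ) + 1 < n
    · have hiff : ∀ j : Fin n, ((i : ℕ) + 1 = (j : ℕ)) ↔ j = ⟨(i : ℕ) + 1, h⟩ := by
        intro j; rw [Fin.ext_iff]; exact eq_comm
      simp only [hiff, dif_pos h]
      rw [Finset.sum_ite_eq' Finset.univ _ fun j => u j, if_pos (Finset.mem_univ _)]
    · rw [dif_neg h]
      refine Finset.sum_eq_zero fun j _ => ?_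
      have := j.isLt
      rw [if_neg (by omega)]

lemma chain_prod_ne_zero (a : Fin n → ℕ) (ha : ∀ i, 1 ≤ a i) (s : Finset (Fin n)) :
    ∏ j ∈ s, (a j : ℚ) ≠ 0 :=
  Finset.prod_ne_zero_iff.mpr fun j _ => by
    have := ha j; positivity

lemma chain_phi_row_lt (a : Fin n → ℕ) (ha : ∀ i, 1 ≤ a i) (φ : Fin n → ℚ)
    (hφ : φ = fun i : Fin n => ((-1 : ℚ)) ^ (n + (i : ℕ)) / ∏ j ∈ Finset.Ici i, (a j : ℚ))
    (i : Fin n) (h : (i : ℕ) + 1 < n) :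
    (a i : ℚ) * φ i + φ ⟨(i : ℕ) + 1, h⟩ = 0 := by
  subst hφ
  set i' : Fin n := ⟨(i : ℕ) + 1, h⟩ with hi'
  have hprod : ∏ j ∈ Finset.Ici i, (a j : ℚ) = (a i : ℚ) * ∏ j ∈ Finset.Ici i', (a j : ℚ) := by
    rw [fin_Ici_insert i h, Finset.prod_insert (by simp only [Finset.mem_Ici, Fin.le_def, hi']; omega)]
  have hne : ∏ j ∈ Finset.Ici i', (a j : ℚ) ≠ 0 := chain_prod_ne_zero a ha _
  have hane : (a i : ℚ) ≠ 0 := by have := ha i; positivity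
  have hexp : n + (i' : ℕ) = (n + (i : ℕ)) + 1 := by simp only [hi', Fin.val_mk]; omega
  simp only [hprod, hexp, pow_succ]
  field_simp
  ring

lemma chain_phi_row_top (a : Fin n → ℕ) (ha : ∀ i, 1 ≤ a i) (φ : Fin n → ℚ)
    (hφ : φ = fun i : Fin n => ((-1 : ℚ)) ^ (n + (i : ℕ)) / ∏ j ∈ Finset.Ici i, (a j : ℚ))
    (i : Fin n) (h : (i : ℕ) + 1 = n) :
    (a i : ℚ) * φ i = -1 := by
  subst hφ
  have hprod : ∏ j ∈ Finset.Ici i, (a j : ℚ) = (a i : ℚ) := by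
    rw [fin_Ici_top i h, Finset.prod_singleton]
  have hane : (a i : ℚ) ≠ 0 := by have := ha i; positivity
  have hodd : Odd (n + (i : ℕ)) := by refine ⟨(i : ℕ), by omega⟩
  simp only [hprod, hodd.neg_one_pow]
  field_simp

-- A·φ ∈ ℤⁿ
lemma chain_phi_mulVec (a : Fin n → ℕ) (ha : ∀ i, 1 ≤ a i)
    (A : Matrix (Fin n) (Fin n) ℤ)
    (hAdef : A = Matrix.of fun i j =>
      if j = i then (a i : ℤ) else if (i : ℕ) + 1 = (j : ℕ) then 1 else 0)
    (φ : Fin n → ℚ)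
    (hφ : φ = fun i : Fin n => ((-1 : ℚ)) ^ (n + (i : ℕ)) / ∏ j ∈ Finset.Ici i, (a j : ℚ)) :
    (ratMat A).mulVec φ ∈ IntLat n := by
  intro i
  rw [chain_row a A hAdef φ i]
  by_cases h : (i : ℕ) + 1 < n
  · exact ⟨0, by rw [dif_pos h]; push_cast [chain_phi_row_lt a ha φ hφ i h]; simp⟩
  · have htop : (i : ℕ) + 1 = n := by have := i.isLt; omega
    exact ⟨-1, by rw [dif_neg h, add_zero, chain_phi_row_top a ha φ hφ i htop]; simp⟩

end ChainAux

section ChainAux2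

variable {n : ℕ}

/-- For any integer right-hand side m, there are K and an integer vector W solving the
chain recurrence with tail correction K. -/
lemma chain_solution (a : Fin n → ℕ) (m : Fin n → ℤ) :
    ∃ (K : ℤ) (W : Fin n → ℤ),
      (∀ (i : Fin n) (h : (i : ℕ) + 1 < n),
        (a i : ℤ) * W i + W ⟨(i : ℕ) + 1, h⟩ = m i) ∧
      (∀ i : Fin n, (i : ℕ) + 1 = n → (a i : ℤ) * W i = m i + K) := by
  refine ⟨∑ j : Fin n, (-1 : ℤ) ^ (n + (j : ℕ)) * m j * ∏ k ∈ Finset.Ioi j, (a k : ℤ),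
    fun i => -∑ j ∈ Finset.Iio i,
      (-1 : ℤ) ^ ((i : ℕ) + (j : ℕ)) * m j * ∏ k ∈ Finset.Ioo j i, (a k : ℤ), ?_, ?_⟩
  · intro i h
    dsimp only
    set i' : Fin n := ⟨(i : ℕ) + 1, h⟩ with hi'
    have hkey : ∀ j ∈ Finset.Iio i,
        (-1 : ℤ) ^ ((i' : ℕ) + (j : ℕ)) * m j * ∏ k ∈ Finset.Ioo j i', (a k : ℤ)
        = -((a i : ℤ) * ((-1 : ℤ) ^ ((i : ℕ) + (j : ℕ)) * m j * ∏ k ∈ Finset.Ioo j i, (a k : ℤ))) := by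
      intro j hj
      have hji : (j : ℕ) < (i : ℕ) := Fin.lt_def.mp (Finset.mem_Iio.mp hj)
      rw [fin_Ioo_insert j i hji h,
        Finset.prod_insert (by simp only [Finset.mem_Ioo, Fin.lt_def]; omega)]
      have hexp : (i' : ℕ) + (j : ℕ) = ((i : ℕ) + (j : ℕ)) + 1 := by
        simp only [hi', Fin.val_mk]; omega
      rw [hexp, pow_succ]
      ring
    have hsum : ∑ j ∈ Finset.Iio i',
        (-1 : ℤ) ^ ((i' : ℕ) + (j : ℕ)) * m j * ∏ k ∈ Finset.Ioo j i', (a k : ℤ)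
        = -(m i) + -((a i : ℤ) * ∑ j ∈ Finset.Iio i,
            (-1 : ℤ) ^ ((i : ℕ) + (j : ℕ)) * m j * ∏ k ∈ Finset.Ioo j i, (a k : ℤ)) := by
      rw [fin_Iio_insert i h, Finset.sum_insert (by simp only [Finset.mem_Iio, lt_self_iff_false, not_false_eq_true])]
      congr 1
      · rw [fin_Ioo_self i i h]
        have hexp : (i' : ℕ) + (i : ℕ) = 2 * (i : ℕ) + 1 := by
          simp only [hi', Fin.val_mk]; omega
        rw [hexp, Finset.prod_empty]
        have : (-1 : ℤ) ^ (2 * (i : ℕ) + 1) = -1 := Odd.neg_one_pow ⟨(i : ℕ), by omega⟩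
        rw [this]; ring
      · rw [Finset.sum_congr rfl hkey, Finset.sum_neg_distrib, Finset.mul_sum]
    rw [hsum]
    ring
  · intro i h
    dsimp only
    have huniv : ∑ j : Fin n, (-1 : ℤ) ^ (n + (j : ℕ)) * m j * ∏ k ∈ Finset.Ioi j, (a k : ℤ)
        = -(m i) + -((a i : ℤ) * ∑ j ∈ Finset.Iio i,
            (-1 : ℤ) ^ ((i : ℕ) + (j : ℕ)) * m j * ∏ k ∈ Finset.Ioo j i, (a k : ℤ)) := by
      rw [fin_univ_top i h, Finset.sum_insert (by simp only [Finset.mem_Iio, lt_self_iff_false, not_false_eq_true])]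
      congr 1
      · rw [fin_Ioi_top i h, Finset.prod_empty]
        have hexp : n + (i : ℕ) = 2 * (i : ℕ) + 1 := by omega
        rw [hexp]
        have : (-1 : ℤ) ^ (2 * (i : ℕ) + 1) = -1 := Odd.neg_one_pow ⟨(i : ℕ), by omega⟩
        rw [this]; ring
      · have hkey : ∀ j ∈ Finset.Iio i,
            (-1 : ℤ) ^ (n + (j : ℕ)) * m j * ∏ k ∈ Finset.Ioi j, (a k : ℤ)
            = -((a i : ℤ) * ((-1 : ℤ) ^ ((i : ℕ) + (j : ℕ)) * m j * ∏ k ∈ Finset.Ioo j i, (a k : ℤ))) := by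
          intro j hj
          have hji : (j : ℕ) < (i : ℕ) := Fin.lt_def.mp (Finset.mem_Iio.mp hj)
          rw [fin_Ioi_top_insert j i hji h,
            Finset.prod_insert (by simp only [Finset.mem_Ioo, Fin.lt_def]; omega)]
          have hexp : n + (j : ℕ) = ((i : ℕ) + (j : ℕ)) + 1 := by omega
          rw [hexp, pow_succ]
          ring
        rw [Finset.sum_congr rfl hkey, Finset.sum_neg_distrib, Finset.mul_sum]
    rw [huniv]
    ring

end ChainAux2

section ChainAux3

variable {n : ℕ}

lemma chain_inj (a : Fin n → ℕ) (ha : ∀ i, 1 ≤ a i) (A : Matrix (Fin n) (Fin n) ℤ)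
    (hAdef : A = Matrix.of fun i j =>
      if j = i then (a i : ℤ) else if (i : ℕ) + 1 = (j : ℕ) then 1 else 0) :
    Function.Injective (ratMat A).mulVec := by
  rw [Matrix.mulVec_injective_iff_isUnit, Matrix.isUnit_iff_isUnit_det]
  have htri : (ratMat A).BlockTriangular id := by
    intro i j hij
    have hij' : (j : ℕ) < (i : ℕ) := hij
    subst hAdef
    simp only [ratMat, Matrix.map_apply, Matrix.of_apply]
    rw [if_neg (by rw [Fin.ext_iff]; omega), if_neg (by omega)]
    rfl
  have hdet : (ratMat A).det = ∏ i, (a i : ℚ) := by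
    rw [Matrix.det_of_upperTriangular htri]
    refine Finset.prod_congr rfl fun i _ => ?_
    subst hAdef
    simp [ratMat]
  rw [hdet]
  exact isUnit_iff_ne_zero.mpr (chain_prod_ne_zero a ha _)

lemma chain_mem (a : Fin n → ℕ) (ha : ∀ i, 1 ≤ a i) (A : Matrix (Fin n) (Fin n) ℤ)
    (hAdef : A = Matrix.of fun i j =>
      if j = i then (a i : ℤ) else if (i : ℕ) + 1 = (j : ℕ) then 1 else 0)
    (φ : Fin n → ℚ)
    (hφ : φ = fun i : Fin n => ((-1 : ℚ)) ^ (n + (i : ℕ)) / ∏ j ∈ Finset.Ici i, (a j : ℚ))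
    (v : Fin n → ℚ) (hv : (ratMat A).mulVec v ∈ IntLat n) :
    ∃ (k : ℤ) (w : Fin n → ℚ), w ∈ IntLat n ∧ v = k • φ + w := by
  have hv' : ∀ i, ∃ m : ℤ, (ratMat A).mulVec v i = (m : ℚ) := hv
  choose m hm using hv'
  obtain ⟨K, W, hW1, hW2⟩ := chain_solution a m
  set u : Fin n → ℚ := K • φ + fun i => ((W i : ℤ) : ℚ) with hu
  have hrow : ∀ i, u i = (K : ℚ) * φ i + ((W i : ℤ) : ℚ) := by
    intro i; simp [hu, zsmul_eq_mul]
  have heq : (ratMat A).mulVec u = (ratMat A).mulVec v := by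
    funext i
    rw [chain_row a A hAdef u i, hm i]
    by_cases h : (i : ℕ) + 1 < n
    · rw [dif_pos h, hrow i, hrow ⟨(i : ℕ) + 1, h⟩]
      have hq1 : (a i : ℚ) * φ i + φ ⟨(i : ℕ) + 1, h⟩ = 0 := chain_phi_row_lt a ha φ hφ i h
      have hq2 : (a i : ℚ) * ((W i : ℤ) : ℚ) + ((W ⟨(i : ℕ) + 1, h⟩ : ℤ) : ℚ) = (m i : ℚ) := by
        exact_mod_cast congrArg (fun z : ℤ => (z : ℚ)) (hW1 i h)
      linear_combination (K : ℚ) * hq1 + hq2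
    · have htop : (i : ℕ) + 1 = n := by have := i.isLt; omega
      rw [dif_neg h, hrow i, add_zero]
      have hq1 : (a i : ℚ) * φ i = -1 := chain_phi_row_top a ha φ hφ i htop
      have hq2 : (a i : ℚ) * ((W i : ℤ) : ℚ) = (m i : ℚ) + (K : ℚ) := by
        exact_mod_cast congrArg (fun z : ℤ => (z : ℚ)) (hW2 i htop)
      linear_combination (K : ℚ) * hq1 + hq2
  have := chain_inj a ha A hAdef heq
  exact ⟨K, fun i => ((W i : ℤ) : ℚ), fun i => ⟨W i, rfl⟩, this.symm⟩

lemma chain_order (hn : 1 ≤ n) (a : Fin n → ℕ) (ha : ∀ i, 1 ≤ a i)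
    (φ : Fin n → ℚ)
    (hφ : φ = fun i : Fin n => ((-1 : ℚ)) ^ (n + (i : ℕ)) / ∏ j ∈ Finset.Ici i, (a j : ℚ)) :
    addOrderOf (QuotientAddGroup.mk' (IntLat n) φ) = ∏ i, a i := by
  have hNpos : 0 < ∏ i, a i := Finset.prod_pos fun i _ => ha i
  rw [addOrderOf_eq_iff hNpos]
  constructor
  · rw [← map_nsmul]
    refine (QuotientAddGroup.eq_zero_iff _).mpr ?_
    intro i
    refine ⟨(-1) ^ (n + (i : ℕ)) * ∏ j ∈ Finset.Iio i, (a j : ℤ), ?_⟩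
    have hdisj : Disjoint (Finset.Iio i) (Finset.Ici i) := by
      rw [Finset.disjoint_left]
      intro x hx hx'
      rw [Finset.mem_Iio] at hx
      rw [Finset.mem_Ici] at hx'
      exact absurd (lt_of_lt_of_le hx hx') (lt_irrefl x)
    have hN : ((∏ i, a i : ℕ) : ℚ)
        = (∏ j ∈ Finset.Iio i, (a j : ℚ)) * ∏ j ∈ Finset.Ici i, (a j : ℚ) := by
      push_cast
      rw [fin_univ_split i, Finset.prod_union hdisj]
    have hne : ∏ j ∈ Finset.Ici i, (a j : ℚ) ≠ 0 := chain_prod_ne_zero a ha _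
    rw [Pi.smul_apply, nsmul_eq_mul, hφ, hN]
    push_cast
    field_simp
  · intro k hk hk0 hcon
    rw [← map_nsmul] at hcon
    have hmem : k • φ ∈ IntLat n := (QuotientAddGroup.eq_zero_iff _).mp hcon
    set i0 : Fin n := ⟨0, by omega⟩ with hi0
    obtain ⟨t, ht⟩ := hmem i0
    have hIci : Finset.Ici i0 = Finset.univ := by
      ext j; simp only [Finset.mem_Ici, Finset.mem_univ, iff_true, Fin.le_def, hi0]
      omega
    have hNne : ((∏ i, a i : ℕ) : ℚ) ≠ 0 := by positivity
    rw [Pi.smul_apply, nsmul_eq_mul, hφ] at ht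
    simp only [hIci] at ht
    have hexp : n + (i0 : ℕ) = n := by simp [hi0]
    rw [hexp] at ht
    have hden : (∏ i : Fin n, (a i : ℚ)) ≠ 0 := chain_prod_ne_zero a ha _
    rw [← mul_div_assoc, div_eq_iff hden] at ht
    have ht' : (k : ℚ) * (-1) ^ n = t * ∏ i : Fin n, (a i : ℚ) := by linarith [ht]
    have htz : (k : ℤ) * (-1) ^ n = t * ((∏ i, a i : ℕ) : ℤ) := by
      have h2 : ((t * ((∏ i, a i : ℕ) : ℤ) : ℤ) : ℚ) = (t : ℚ) * ∏ i : Fin n, (a i : ℚ) := by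
        push_cast; ring
      exact_mod_cast ht'.trans h2.symm
    have hdvd : ((∏ i, a i : ℕ) : ℤ) ∣ (k : ℤ) := by
      rcases neg_one_pow_eq_or ℤ n with hp | hp <;> rw [hp] at htz
      · exact ⟨t, by linarith⟩
      · exact ⟨-t, by linarith⟩
    have := Int.le_of_dvd (by exact_mod_cast hk0) hdvd
    omega

end ChainAux3

theorem stmt_6' (n : ℕ) (hn : 1 ≤ n) (a : Fin n → ℕ) (ha : ∀ i, 1 ≤ a i)
    (A : Matrix (Fin n) (Fin n) ℤ)
    (hAdef : A = Matrix.of fun i j =>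
      if j = i then (a i : ℤ) else if (i : ℕ) + 1 = (j : ℕ) then 1 else 0)
    (φ : Fin n → ℚ)
    (hφ : φ = fun i : Fin n => ((-1 : ℚ)) ^ (n + (i : ℕ)) / ∏ j ∈ Finset.Ici i, (a j : ℚ)) :
    (AddSubgroup.comap (ratMat A).mulVecLin.toAddMonoidHom (IntLat n)).map
      (QuotientAddGroup.mk' (IntLat n))
      = AddSubgroup.zmultiples (QuotientAddGroup.mk' (IntLat n) φ) ∧
      Nat.card ((AddSubgroup.comap (ratMat A).mulVecLin.toAddMonoidHom (IntLat n)).map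
      (QuotientAddGroup.mk' (IntLat n))) = ∏ i, a i := by
  have hgen : (AddSubgroup.comap (ratMat A).mulVecLin.toAddMonoidHom (IntLat n)).map
      (QuotientAddGroup.mk' (IntLat n))
      = AddSubgroup.zmultiples (QuotientAddGroup.mk' (IntLat n) φ) := by
    apply le_antisymm
    · rintro x hx
      obtain ⟨w, hw, rfl⟩ := hx
      have hw' : (ratMat A).mulVec w ∈ IntLat n := by
        simpa [Matrix.mulVecLin_apply] using hw
      obtain ⟨k, w0, hw0, rfl⟩ := chain_mem a ha A hAdef φ hφ w hw'
      rw [AddSubgroup.mem_zmultiples_iff]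
      refine ⟨k, ?_⟩
      rw [map_add, map_zsmul]
      have : (QuotientAddGroup.mk' (IntLat n)) w0 = 0 :=
        (QuotientAddGroup.eq_zero_iff _).mpr hw0
      rw [this, add_zero]
    · rw [AddSubgroup.zmultiples_le]
      refine ⟨φ, ?_, rfl⟩
      show (ratMat A).mulVecLin.toAddMonoidHom φ ∈ IntLat n
      simpa [Matrix.mulVecLin_apply] using chain_phi_mulVec a ha A hAdef φ hφ
  refine ⟨hgen, ?_⟩
  rw [hgen, Nat.card_zmultiples, chain_order hn a ha φ hφ]

/-- For the chain potential, Aut(W) = A⁻¹ℤ^n/ℤ^n is cyclic of order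
a₁⋯aₙ generated by (φ₁,…,φₙ) with φᵢ = (−1)^{n+i}/(aᵢ⋯aₙ). -/
theorem stmt_6 (n : ℕ) (hn : 1 ≤ n) (a : Fin n → ℕ) (ha : ∀ i, 1 ≤ a i)
    (A : Matrix (Fin n) (Fin n) ℤ)
    (hAdef : A = Matrix.of fun i j =>
      if j = i then (a i : ℤ) else if (i : ℕ) + 1 = (j : ℕ) then 1 else 0)
    (φ : Fin n → ℚ)
    (hφ : φ = fun i : Fin n => ((-1 : ℚ)) ^ (n + (i : ℕ)) / ∏ j ∈ Finset.Ici i, (a j : ℚ)) :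
    AutW A = AddSubgroup.zmultiples (QuotientAddGroup.mk' (IntLat n) φ) ∧
      Nat.card (AutW A) = ∏ i, a i := by
  exact stmt_6' n hn a ha A hAdef φ hφ
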